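/- Let V be a valuation domain and A a semilocal domain with s maximal ideals m_1,…,m_s, with Q(A)=Q(V)=Q(A∩V), and suppose every residue field of A∩V has at least s+1 elements. If A∩V is not local, then for every i, the localization A_{m_i} equals the localization of A∩V at the prime m_i ∩ V ∩ A∩V (i.e., A_{m_i} = (A∩V)_{m_i ∩ V}). -/

import Mathlib

universe u

/-- In a commutative ring with finitely many maximal ideals, all of whose residue fields
have at least `n` elements, there is a family of `n` elements whose pairwise differences
are units. -/
private lemma exists_unit_diff_family {T : Type u} [CommRing T] [Nontrivial T] (n : ℕ)
    (hfin : {M : Ideal T | M.IsMaximal}.Finite)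
    (hbig : ∀ M : Ideal T, M.IsMaximal → ((n : Cardinal) ≤ Cardinal.mk (T ⧸ M))) :
    ∃ r : Fin n → T, ∀ k k' : Fin n, k ≠ k' → IsUnit (r k - r k') := by
  classical
  set F : Finset (Ideal T) := hfin.toFinset with hF
  have hmemF : ∀ M : Ideal T, M.IsMaximal ↔ M ∈ F := by
    intro M
    rw [hF, Set.Finite.mem_toFinset]
    exact Iff.rfl
  have hco : Pairwise fun i j : {M // M ∈ F} => IsCoprime (i.1 : Ideal T) j.1 := by
    intro i j hij
    exact (Ideal.isCoprime_iff_sup_eq).mpr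
      (Ideal.IsMaximal.coprime_of_ne ((hmemF _).mpr i.2) ((hmemF _).mpr j.2)
        fun h => hij (Subtype.ext h))
  have hembn : ∀ i : {M // M ∈ F}, Nonempty (Fin n ↪ T ⧸ (i.1 : Ideal T)) := by
    intro i
    have h1 : Cardinal.lift.{u} (Cardinal.mk (Fin n)) ≤
        Cardinal.lift.{0} (Cardinal.mk (T ⧸ (i.1 : Ideal T))) := by
      rw [Cardinal.mk_fin, Cardinal.lift_natCast, Cardinal.lift_uzero]
      exact hbig _ ((hmemF _).mpr i.2)
    exact Cardinal.lift_mk_le'.mp h1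
  have g : ∀ i : {M // M ∈ F}, Fin n ↪ T ⧸ (i.1 : Ideal T) := fun i => (hembn i).some
  have ht : ∀ (i : {M // M ∈ F}) (k : Fin n), ∃ t : T,
      Ideal.Quotient.mk (i.1 : Ideal T) t = g i k :=
    fun i k => Ideal.Quotient.mk_surjective (g i k)
  choose t htt using ht
  have hr : ∀ k : Fin n, ∃ r : T, ∀ i : {M // M ∈ F}, r - t i k ∈ (i.1 : Ideal T) :=
    fun k => Ideal.exists_forall_sub_mem_ideal hco (fun i => t i k)
  choose r hrr using hr
  refine ⟨r, ?_⟩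
  intro k k' hkk'
  by_contra hu
  obtain ⟨M, hM, hmem⟩ := exists_max_ideal_of_mem_nonunits (mem_nonunits_iff.mpr hu)
  set i : {M // M ∈ F} := ⟨M, (hmemF M).mp hM⟩ with hi
  have h1 : r k - t i k ∈ M := hrr k i
  have h2 : r k' - t i k' ∈ M := hrr k' i
  have h3 : t i k - t i k' ∈ M := by
    have h4 : (r k - r k') - (r k - t i k) + (r k' - t i k') ∈ M :=
      Ideal.add_mem _ (Ideal.sub_mem _ hmem h1) h2
    have h5 : t i k - t i k' = (r k - r k') - (r k - t i k) + (r k' - t i k') := by ring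
    rw [h5]
    exact h4
  have h6 : Ideal.Quotient.mk (i.1 : Ideal T) (t i k) = Ideal.Quotient.mk _ (t i k') :=
    Ideal.Quotient.eq.mpr h3
  rw [htt i k, htt i k'] at h6
  exact hkk' ((g i).injective h6)

/-- **Theorem 4.7(ii).**
Let `V` be a valuation domain and `A` a semilocal domain with maximal ideals
`m₁, …, m_s`, inside a common quotient field `K` which is also the quotient field of
`A ∩ V`, and suppose every residue field of `A ∩ V` has at least `s + 1` elements.  If
`A ∩ V` is not local, then for every maximal ideal `m` of `A` the localization `A_m`
coincides with the localization of `A ∩ V` at the contraction `m ∩ V` (both realized as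
subsets of `K`). -/
theorem inf_valuation_not_local_localizations
    {K : Type*} [Field K] (A : Subring K) (V : ValuationSubring K) (s : ℕ)
    [Fintype (MaximalSpectrum A)] (hs : Fintype.card (MaximalSpectrum A) = s)
    (hfrac : ∀ x : K, ∃ a ∈ A ⊓ V.toSubring, ∃ b ∈ A ⊓ V.toSubring, b ≠ 0 ∧ x = a / b)
    (hres : ∀ m : Ideal ↥(A ⊓ V.toSubring), m.IsMaximal →
      ((s : Cardinal) + 1) ≤ Cardinal.mk (↥(A ⊓ V.toSubring) ⧸ m))
    (hnotloc : ¬ IsLocalRing ↥(A ⊓ V.toSubring))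
    (m : Ideal A) (hm : m.IsMaximal) :
    {x : K | ∃ a s' : A, (s' ∉ m) ∧ x = (a : K) / (s' : K)} =
      {x : K | ∃ a s' : ↥(A ⊓ V.toSubring),
        (¬ ∃ h : (s' : K) ∈ A, (⟨(s' : K), h⟩ : A) ∈ m) ∧
        x = (a : K) / (s' : K)} := by
  classical
  set R : Subring K := A ⊓ V.toSubring with hRdef
  haveI : Nontrivial ↥R := by
    refine ⟨0, 1, fun h01 => ?_⟩
    have : (0 : K) = 1 := congrArg Subtype.val h01
    exact zero_ne_one this
  -- the inclusion homomorphisms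
  let ιA : ↥R →+* ↥A := Subring.inclusion inf_le_left
  let ψ : ↥R →+* ↥V :=
    { toFun := fun x => ⟨(x : K), (Subring.mem_inf.mp x.2).2⟩
      map_one' := rfl
      map_mul' := fun _ _ => rfl
      map_zero' := rfl
      map_add' := fun _ _ => rfl }
  have hcoeA : ∀ x : ↥R, ((ιA x : ↥A) : K) = (x : K) := fun _ => rfl
  have hcoeV : ∀ x : ↥R, ((ψ x : ↥V) : K) = (x : K) := fun _ => rfl
  -- the contracted prime ideals
  let q : Ideal ↥R := (IsLocalRing.maximalIdeal ↥V).comap ψ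
  have hq : q.IsPrime := Ideal.comap_isPrime ψ _
  let pI : MaximalSpectrum A → Ideal ↥R := fun μ => μ.asIdeal.comap ιA
  have hpI : ∀ μ, (pI μ).IsPrime := fun μ => Ideal.comap_isPrime ιA μ.asIdeal
  -- any nonunit of R lies in q or in some pI μ
  have hcover : ∀ x : ↥R, ¬IsUnit x → x ∈ q ∨ ∃ μ, x ∈ pI μ := by
    intro x hx
    by_contra hc
    push_neg at hc
    obtain ⟨hq', hp'⟩ := hc
    apply hx
    have huV : IsUnit (ψ x) := by
      by_contra h
      exact hq' (Ideal.mem_comap.mpr ((IsLocalRing.mem_maximalIdeal _).mpr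
        (mem_nonunits_iff.mpr h)))
    have huA : IsUnit (ιA x) := by
      by_contra h
      obtain ⟨M, hM, hmem⟩ := exists_max_ideal_of_mem_nonunits (mem_nonunits_iff.mpr h)
      exact hp' ⟨M, hM⟩ (Ideal.mem_comap.mpr hmem)
    have hx0 : (x : K) ≠ 0 := by
      intro h0
      have hψ0 : ψ x = 0 := Subtype.ext h0
      rw [hψ0] at huV
      exact huV.ne_zero rfl
    -- the inverse of x in K lies in both A and V
    have hmulA : (ιA x) * ↑huA.unit⁻¹ = 1 := huA.mul_val_inv
    have hmulAK : (x : K) * (((huA.unit⁻¹ : (↥A)ˣ) : ↥A) : K) = 1 := by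
      have := congrArg (Subtype.val) hmulA
      push_cast at this
      rw [hcoeA x] at this
      exact_mod_cast this
    have hinvA : (x : K)⁻¹ ∈ A := by
      have : (((huA.unit⁻¹ : (↥A)ˣ) : ↥A) : K) = (x : K)⁻¹ := eq_inv_of_mul_eq_one_right hmulAK
      rw [← this]
      exact ((huA.unit⁻¹ : (↥A)ˣ) : ↥A).2
    have hmulV : (ψ x) * ↑huV.unit⁻¹ = 1 := huV.mul_val_inv
    have hmulVK : (x : K) * (((huV.unit⁻¹ : (↥V)ˣ) : ↥V) : K) = 1 := by
      have := congrArg (Subtype.val) hmulV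
      push_cast at this
      rw [hcoeV x] at this
      exact_mod_cast this
    have hinvV : (x : K)⁻¹ ∈ V.toSubring := by
      have : (((huV.unit⁻¹ : (↥V)ˣ) : ↥V) : K) = (x : K)⁻¹ := eq_inv_of_mul_eq_one_right hmulVK
      rw [← this]
      exact ((huV.unit⁻¹ : (↥V)ˣ) : ↥V).2
    refine IsUnit.of_mul_eq_one (a := x) ⟨(x : K)⁻¹, Subring.mem_inf.mpr ⟨hinvA, hinvV⟩⟩ ?_
    exact Subtype.ext (mul_inv_cancel₀ hx0)
  -- every maximal ideal of R is q or some pI μ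
  have hmax_cases : ∀ M : Ideal ↥R, M.IsMaximal → M = q ∨ ∃ μ, M = pI μ := by
    intro M hM
    have hprime : ∀ o : Option (MaximalSpectrum A), o ∈ (Finset.univ : Finset _) →
        o ≠ none → o ≠ none → (Option.elim o q pI).IsPrime := by
      rintro (_ | μ) _ _ _
      · exact hq
      · exact hpI μ
    have hsub : (M : Set ↥R) ⊆
        ⋃ o ∈ ((Finset.univ : Finset (Option (MaximalSpectrum A))) :
          Set (Option (MaximalSpectrum A))), ((Option.elim o q pI : Ideal ↥R) : Set ↥R) := by
      intro x hxM
      have hnu : ¬IsUnit x := by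
        intro hu
        exact hM.ne_top (M.eq_top_of_isUnit_mem hxM hu)
      rcases hcover x hnu with h | ⟨μ, h⟩
      · exact Set.mem_biUnion (Finset.mem_coe.mpr (Finset.mem_univ (none :
          Option (MaximalSpectrum A)))) h
      · exact Set.mem_biUnion (Finset.mem_coe.mpr (Finset.mem_univ (some μ))) h
    obtain ⟨o, _, hle⟩ := (Ideal.subset_union_prime (R := ↥R)
      (s := (Finset.univ : Finset (Option (MaximalSpectrum A))))
      (f := fun o => Option.elim o q pI) none none
      hprime (I := M)).mp hsub
    cases o with
    | none => exact Or.inl (hM.eq_of_le hq.ne_top hle)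
    | some μ => exact Or.inr ⟨μ, hM.eq_of_le (hpI μ).ne_top hle⟩
  -- hence R has only finitely many maximal ideals
  have hfin : {M : Ideal ↥R | M.IsMaximal}.Finite := by
    refine Set.Finite.subset ((Set.finite_range pI).insert q) ?_
    intro M hM
    rcases hmax_cases M hM with h | ⟨μ, h⟩
    · exact Or.inl h
    · exact Or.inr ⟨μ, h.symm⟩
  -- a family of s+1 elements with unit pairwise differences
  obtain ⟨r, hr⟩ := exists_unit_diff_family (s + 1) hfin (fun M hM => by
    have := hres M hM
    rwa [Nat.cast_add, Nat.cast_one])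
  have hone_m : (1 : ↥A) ∉ m := (Ideal.ne_top_iff_one m).mp hm.ne_top
  -- main lemma: every element of A has a representation with denominator outside m
  have lemE : ∀ α : ↥A, ∃ r₁ s₁ : ↥R, (ιA s₁ ∉ m) ∧ (α : K) = (r₁ : K) / (s₁ : K) := by
    intro α
    by_cases hαV : (α : K) ∈ V.toSubring
    · refine ⟨⟨(α : K), Subring.mem_inf.mpr ⟨α.2, hαV⟩⟩, 1, ?_, by simp⟩
      rw [map_one]
      exact hone_m
    · by_contra hno
      push_neg at hno
      -- every u ∈ R outside m fails to be a denominator for α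
      have hstar : ∀ u : ↥R, ιA u ∉ m → (u : K) * (α : K) ∉ V.toSubring := by
        intro u hu hV'
        have hu0 : (u : K) ≠ 0 := by
          intro h0
          exact hu (by
            have : u = 0 := Subtype.ext h0
            rw [this, map_zero]
            exact m.zero_mem)
        have hmemA : (u : K) * (α : K) ∈ A := A.mul_mem (Subring.mem_inf.mp u.2).1 α.2
        refine hno ⟨(u : K) * (α : K), Subring.mem_inf.mpr ⟨hmemA, hV'⟩⟩ u hu ?_
        show (α : K) = ((u : K) * (α : K)) / (u : K)
        rw [mul_comm, mul_div_assoc, div_self hu0, mul_one]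
      -- α translated by any element of R is a nonunit of A
      have h5 : ∀ t : ↥R, ∃ μ : MaximalSpectrum A, α + ιA t ∈ μ.asIdeal := by
        intro t
        by_contra hc
        push_neg at hc
        have hunit : IsUnit (α + ιA t) := by
          by_contra h
          obtain ⟨M, hM, hmem⟩ := exists_max_ideal_of_mem_nonunits (mem_nonunits_iff.mpr h)
          exact hc ⟨M, hM⟩ hmem
        have hmul : (α + ιA t) * ↑hunit.unit⁻¹ = 1 := hunit.mul_val_inv
        have hmulK : ((α : K) + (t : K)) * (((hunit.unit⁻¹ : (↥A)ˣ) : ↥A) : K) = 1 := by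
          have := congrArg (Subtype.val) hmul
          push_cast at this
          rw [hcoeA t] at this
          exact_mod_cast this
        have hnotV : ((α : K) + (t : K)) ∉ V.toSubring := by
          intro hsum
          apply hαV
          have heq : (α : K) = ((α : K) + (t : K)) - (t : K) := by ring
          rw [heq]
          exact V.toSubring.sub_mem hsum (Subring.mem_inf.mp t.2).2
        have hcV : (((hunit.unit⁻¹ : (↥A)ˣ) : ↥A) : K) ∈ V.toSubring := by
          have hinv : ((α : K) + (t : K))⁻¹ ∈ V :=
            (V.mem_or_inv_mem ((α : K) + (t : K))).resolve_left hnotV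
          have hceq : (((hunit.unit⁻¹ : (↥A)ˣ) : ↥A) : K) = ((α : K) + (t : K))⁻¹ :=
            eq_inv_of_mul_eq_one_right hmulK
          rw [hceq]
          exact hinv
        set c : ↥R := ⟨(((hunit.unit⁻¹ : (↥A)ˣ) : ↥A) : K),
          Subring.mem_inf.mpr ⟨((hunit.unit⁻¹ : (↥A)ˣ) : ↥A).2, hcV⟩⟩ with hcdef
        have hcA : ιA c = ((hunit.unit⁻¹ : (↥A)ˣ) : ↥A) := Subtype.ext rfl
        have hcm : ιA c ∉ m := by
          rw [hcA]
          intro hcm'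
          have h1m : (1 : ↥A) ∈ m := by
            rw [← hmul]
            exact m.mul_mem_left _ hcm'
          exact hone_m h1m
        apply hstar c hcm
        have hcαK : (c : K) * (α : K) = 1 - (((hunit.unit⁻¹ : (↥A)ˣ) : ↥A) : K) * (t : K) := by
          have : (c : K) = (((hunit.unit⁻¹ : (↥A)ˣ) : ↥A) : K) := rfl
          rw [this]
          linear_combination hmulK
        rw [hcαK]
        exact V.toSubring.sub_mem V.toSubring.one_mem
          (V.toSubring.mul_mem hcV (Subring.mem_inf.mp t.2).2)
      -- pigeonhole
      choose μ hμ using fun k : Fin (s + 1) => h5 (r k)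
      have hcard : Fintype.card (MaximalSpectrum A) < Fintype.card (Fin (s + 1)) := by
        simp [hs]
      obtain ⟨k, k', hkk', heq⟩ := Fintype.exists_ne_map_eq_of_card_lt μ hcard
      have hmemμ : (α + ιA (r k)) - (α + ιA (r k')) ∈ (μ k).asIdeal :=
        Ideal.sub_mem _ (hμ k) (heq ▸ hμ k')
      have hdiff : ιA (r k - r k') ∈ (μ k).asIdeal := by
        have hcalc : ιA (r k - r k') = (α + ιA (r k)) - (α + ιA (r k')) := by
          rw [map_sub]
          ring
        rw [hcalc]
        exact hmemμ
      have hUnit : IsUnit (ιA (r k - r k')) := (hr k k' hkk').map ιA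
      exact (μ k).isMaximal.ne_top (Ideal.eq_top_of_isUnit_mem _ hdiff hUnit)
  -- variant with numerator also outside m
  have lemF : ∀ β : ↥A, β ∉ m → ∃ r₂ s₂ : ↥R,
      (ιA r₂ ∉ m) ∧ (ιA s₂ ∉ m) ∧ (β : K) = (r₂ : K) / (s₂ : K) := by
    intro β hβ
    obtain ⟨r₂, s₂, hs₂, hEq⟩ := lemE β
    refine ⟨r₂, s₂, ?_, hs₂, hEq⟩
    intro hr₂m
    have hs0 : (s₂ : K) ≠ 0 := by
      intro h0
      exact hs₂ (by
        have : s₂ = 0 := Subtype.ext h0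
        rw [this, map_zero]
        exact m.zero_mem)
    have hAeq : (ιA r₂ : ↥A) = ιA s₂ * β := by
      apply Subtype.ext
      push_cast
      rw [hcoeA r₂, hcoeA s₂, hEq]
      field_simp
    rw [hAeq] at hr₂m
    rcases hm.isPrime.mem_or_mem hr₂m with h | h
    · exact hs₂ h
    · exact hβ h
  -- now prove the set equality
  ext x
  constructor
  · rintro ⟨α, β, hβ, rfl⟩
    obtain ⟨r₁, s₁, hs₁, h1⟩ := lemE α
    obtain ⟨r₂, s₂, hr₂, hs₂, h2⟩ := lemF β hβ
    have hs₁0 : (s₁ : K) ≠ 0 := by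
      intro h0
      exact hs₁ (by
        have : s₁ = 0 := Subtype.ext h0
        rw [this, map_zero]; exact m.zero_mem)
    have hs₂0 : (s₂ : K) ≠ 0 := by
      intro h0
      exact hs₂ (by
        have : s₂ = 0 := Subtype.ext h0
        rw [this, map_zero]; exact m.zero_mem)
    have hr₂0 : (r₂ : K) ≠ 0 := by
      intro h0
      exact hr₂ (by
        have : r₂ = 0 := Subtype.ext h0
        rw [this, map_zero]; exact m.zero_mem)
    refine ⟨r₁ * s₂, s₁ * r₂, ?_, ?_⟩
    · rintro ⟨hmem, hin⟩
      have hEqA : (⟨((s₁ * r₂ : ↥R) : K), hmem⟩ : ↥A) = ιA (s₁ * r₂) := Subtype.ext rfl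
      rw [hEqA, map_mul] at hin
      rcases hm.isPrime.mem_or_mem hin with h | h
      · exact hs₁ h
      · exact hr₂ h
    · rw [h1, h2]
      push_cast
      field_simp
  · rintro ⟨a, s', hcond, rfl⟩
    have hs'A : (s' : K) ∈ A := (Subring.mem_inf.mp s'.2).1
    have hs'm : ιA s' ∉ m := by
      intro h
      exact hcond ⟨hs'A, by
        have : (⟨(s' : K), hs'A⟩ : ↥A) = ιA s' := Subtype.ext rfl
        rw [this]
        exact h⟩
    exact ⟨ιA a, ιA s', hs'm, rfl⟩
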